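/- Let G be a group, S : Set G a generating set (Subgroup.closure S = ⊤), d K positive natural numbers, D₁ D₂ : G →* Matrix.unitaryGroup (Fin d) ℂ and Ω : G →* Matrix.unitaryGroup (Fin K) ℂ group homomorphisms, and A : Fin K → Matrix (Fin d) (Fin d) ℂ. If for every s ∈ S and every k ∈ Fin K one has (D₂ s)ᴴ * (A k) * (D₁ s) = ∑_l (Ω s) k l • (A l), then for every g ∈ G and every k ∈ Fin K one has (D₂ g)ᴴ * (A k) * (D₁ g) = ∑_l (Ω g) k l • (A l). -/

import Mathlib

open Matrix

private lemma sum_swap_smul {K : ℕ} {d : ℕ} (P Q : Matrix (Fin K) (Fin K) ℂ)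
    (A : Fin K → Matrix (Fin d) (Fin d) ℂ) (k : Fin K) :
    ∑ l, P k l • ∑ m, Q l m • A m = ∑ m, (P * Q) k m • A m := by
  simp only [Finset.smul_sum, smul_smul]
  rw [Finset.sum_comm]
  refine Finset.sum_congr rfl fun m _ => ?_
  rw [Matrix.mul_apply, Finset.sum_smul]

theorem stmt5 {G : Type*} [Group G] (S : Set G) (hS : Subgroup.closure S = ⊤)
    (d K : ℕ) (hd : 0 < d) (hK : 0 < K)
    (D₁ D₂ : G →* Matrix.unitaryGroup (Fin d) ℂ)
    (Ω : G →* Matrix.unitaryGroup (Fin K) ℂ)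
    (A : Fin K → Matrix (Fin d) (Fin d) ℂ)
    (hcov : ∀ s ∈ S, ∀ k : Fin K,
      ((D₂ s : Matrix (Fin d) (Fin d) ℂ))ᴴ * A k * (D₁ s : Matrix (Fin d) (Fin d) ℂ)
        = ∑ l, ((Ω s : Matrix (Fin K) (Fin K) ℂ) k l) • A l) :
    ∀ (g : G) (k : Fin K),
      ((D₂ g : Matrix (Fin d) (Fin d) ℂ))ᴴ * A k * (D₁ g : Matrix (Fin d) (Fin d) ℂ)
        = ∑ l, ((Ω g : Matrix (Fin K) (Fin K) ℂ) k l) • A l := by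
  intro g
  have hg : g ∈ Subgroup.closure S := by rw [hS]; trivial
  induction hg using Subgroup.closure_induction with
  | mem s hs => exact hcov s hs
  | one =>
    intro k
    simp [Matrix.one_apply]
  | mul a b ha hb Ha Hb =>
    intro k
    have hD2 : ((D₂ (a * b) : Matrix (Fin d) (Fin d) ℂ)) =
        (D₂ a : Matrix (Fin d) (Fin d) ℂ) * (D₂ b : Matrix (Fin d) (Fin d) ℂ) := by
      rw [_root_.map_mul]; rfl
    have hD1 : ((D₁ (a * b) : Matrix (Fin d) (Fin d) ℂ)) =
        (D₁ a : Matrix (Fin d) (Fin d) ℂ) * (D₁ b : Matrix (Fin d) (Fin d) ℂ) := by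
      rw [_root_.map_mul]; rfl
    have hΩ : ((Ω (a * b) : Matrix (Fin K) (Fin K) ℂ)) =
        (Ω a : Matrix (Fin K) (Fin K) ℂ) * (Ω b : Matrix (Fin K) (Fin K) ℂ) := by
      rw [_root_.map_mul]; rfl
    rw [hD2, hD1, hΩ, conjTranspose_mul]
    calc ((D₂ b : Matrix (Fin d) (Fin d) ℂ))ᴴ * ((D₂ a : Matrix (Fin d) (Fin d) ℂ))ᴴ * A k *
          ((D₁ a : Matrix (Fin d) (Fin d) ℂ) * (D₁ b : Matrix (Fin d) (Fin d) ℂ))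
        = ((D₂ b : Matrix (Fin d) (Fin d) ℂ))ᴴ *
            (((D₂ a : Matrix (Fin d) (Fin d) ℂ))ᴴ * A k * (D₁ a : Matrix (Fin d) (Fin d) ℂ)) *
            (D₁ b : Matrix (Fin d) (Fin d) ℂ) := by simp only [mul_assoc]
      _ = ((D₂ b : Matrix (Fin d) (Fin d) ℂ))ᴴ *
            (∑ l, ((Ω a : Matrix (Fin K) (Fin K) ℂ) k l) • A l) *
            (D₁ b : Matrix (Fin d) (Fin d) ℂ) := by rw [Ha k]
      _ = ∑ l, ((Ω a : Matrix (Fin K) (Fin K) ℂ) k l) •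
            (((D₂ b : Matrix (Fin d) (Fin d) ℂ))ᴴ * A l * (D₁ b : Matrix (Fin d) (Fin d) ℂ)) := by
          rw [Finset.mul_sum, Finset.sum_mul]
          refine Finset.sum_congr rfl fun l _ => ?_
          rw [mul_smul_comm, smul_mul_assoc]
      _ = ∑ l, ((Ω a : Matrix (Fin K) (Fin K) ℂ) k l) •
            (∑ m, ((Ω b : Matrix (Fin K) (Fin K) ℂ) l m) • A m) := by
          refine Finset.sum_congr rfl fun l _ => ?_
          rw [Hb l]
      _ = ∑ m, (((Ω a : Matrix (Fin K) (Fin K) ℂ) * (Ω b : Matrix (Fin K) (Fin K) ℂ)) k m) • A m :=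
          sum_swap_smul _ _ _ _
  | inv a ha Ha =>
    intro k
    have hD2 : ((D₂ a⁻¹ : Matrix (Fin d) (Fin d) ℂ)) =
        ((D₂ a : Matrix (Fin d) (Fin d) ℂ))ᴴ := by
      rw [map_inv, ← Unitary.star_eq_inv]; rfl
    have hD1 : ((D₁ a⁻¹ : Matrix (Fin d) (Fin d) ℂ)) =
        ((D₁ a : Matrix (Fin d) (Fin d) ℂ))ᴴ := by
      rw [map_inv, ← Unitary.star_eq_inv]; rfl
    have hΩ : ((Ω a⁻¹ : Matrix (Fin K) (Fin K) ℂ)) =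
        ((Ω a : Matrix (Fin K) (Fin K) ℂ))ᴴ := by
      rw [map_inv, ← Unitary.star_eq_inv]; rfl
    rw [hD2, hD1, hΩ, conjTranspose_conjTranspose]
    have key : ((D₂ a : Matrix (Fin d) (Fin d) ℂ))ᴴ *
        (∑ l, (((Ω a : Matrix (Fin K) (Fin K) ℂ))ᴴ k l) • A l) *
        (D₁ a : Matrix (Fin d) (Fin d) ℂ) = A k := by
      rw [Finset.mul_sum, Finset.sum_mul]
      calc ∑ l, ((D₂ a : Matrix (Fin d) (Fin d) ℂ))ᴴ *
            ((((Ω a : Matrix (Fin K) (Fin K) ℂ))ᴴ k l) • A l) * (D₁ a : Matrix (Fin d) (Fin d) ℂ)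
          = ∑ l, (((Ω a : Matrix (Fin K) (Fin K) ℂ))ᴴ k l) •
            ∑ m, ((Ω a : Matrix (Fin K) (Fin K) ℂ) l m) • A m := by
            refine Finset.sum_congr rfl fun l _ => ?_
            rw [mul_smul_comm, smul_mul_assoc, Ha l]
        _ = ∑ m, ((((Ω a : Matrix (Fin K) (Fin K) ℂ))ᴴ * (Ω a : Matrix (Fin K) (Fin K) ℂ)) k m) • A m :=
            sum_swap_smul _ _ _ _
        _ = A k := by
            have := Matrix.UnitaryGroup.star_mul_self (Ω a)
            rw [Matrix.star_eq_conjTranspose] at this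
            rw [this]
            simp [Matrix.one_apply]
    calc (D₂ a : Matrix (Fin d) (Fin d) ℂ) * A k * ((D₁ a : Matrix (Fin d) (Fin d) ℂ))ᴴ
        = (D₂ a : Matrix (Fin d) (Fin d) ℂ) *
          (((D₂ a : Matrix (Fin d) (Fin d) ℂ))ᴴ *
            (∑ l, (((Ω a : Matrix (Fin K) (Fin K) ℂ))ᴴ k l) • A l) *
            (D₁ a : Matrix (Fin d) (Fin d) ℂ)) * ((D₁ a : Matrix (Fin d) (Fin d) ℂ))ᴴ := by
          rw [key]
      _ = ((D₂ a : Matrix (Fin d) (Fin d) ℂ) * ((D₂ a : Matrix (Fin d) (Fin d) ℂ))ᴴ) *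
            ((∑ l, (((Ω a : Matrix (Fin K) (Fin K) ℂ))ᴴ k l) • A l) *
            ((D₁ a : Matrix (Fin d) (Fin d) ℂ) * ((D₁ a : Matrix (Fin d) (Fin d) ℂ))ᴴ)) := by
          simp only [mul_assoc]
      _ = ∑ l, (((Ω a : Matrix (Fin K) (Fin K) ℂ))ᴴ k l) • A l := by
          have h2 : (D₂ a : Matrix (Fin d) (Fin d) ℂ) * star (D₂ a : Matrix (Fin d) (Fin d) ℂ) = 1 :=
            (D₂ a).2.2
          have h1 : (D₁ a : Matrix (Fin d) (Fin d) ℂ) * star (D₁ a : Matrix (Fin d) (Fin d) ℂ) = 1 :=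
            (D₁ a).2.2
          rw [Matrix.star_eq_conjTranspose] at h1 h2
          rw [h1, h2, one_mul, mul_one]
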